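/- Let A be a unital C*-algebra, n ≥ 1, and let T ∈ Mₙ(ℂ) be a real orthogonal matrix with T(1,0,…,0)ᵗ = (1/√n, …, 1/√n)ᵗ. Then an orthogonal unitary U ∈ Mₙ(A) is bistochastic if and only if TᵗUT is a block matrix with the unit 1 of A in the upper-left (1,1) corner, zeros in the rest of the first row and column, and an orthogonal unitary (n−1)×(n−1) matrix over A in the lower-right block. -/

import Mathlib

section Aux
variable {A : Type*} [CStarAlgebra A]

lemma aux_comm (x y : ℂ) (u : A) :
    algebraMap ℂ A x * u * algebraMap ℂ A y = algebraMap ℂ A (x * y) * u := by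
  rw [mul_assoc, ← Algebra.commutes, ← mul_assoc, ← map_mul]

end Aux

/-- Let `T ∈ M_{n+1}(ℂ)` be a real orthogonal matrix whose first column is
`(1/√(n+1), …, 1/√(n+1))ᵗ`. An orthogonal unitary `U ∈ M_{n+1}(A)` over a unital
C*-algebra `A` is bistochastic iff `TᵗUT` is a block matrix with `1` in the
upper-left corner, zeros in the rest of the first row and column, and an
orthogonal unitary `n × n` matrix in the lower-right block. -/
theorem bistochastic_iff_block_form {A : Type*} [CStarAlgebra A]
    {n : ℕ} (T : Matrix (Fin (n + 1)) (Fin (n + 1)) ℂ)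
    (hTreal : ∀ i j, (T i j).im = 0)
    (hTorth : T * T.transpose = 1 ∧ T.transpose * T = 1)
    (hTcol : ∀ i, T i 0 = ((1 / Real.sqrt (n + 1) : ℝ) : ℂ))
    (U : Matrix (Fin (n + 1)) (Fin (n + 1)) A)
    (hsa : ∀ i j, star (U i j) = U i j)
    (hunitary : U * U.conjTranspose = 1 ∧ U.conjTranspose * U = 1) :
    ((∀ i, (∑ j, U i j) = 1) ∧ (∀ j, (∑ i, U i j) = 1)) ↔
      (let V := (T.map (algebraMap ℂ A)).transpose * U * T.map (algebraMap ℂ A)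
       V 0 0 = 1 ∧
       (∀ j, j ≠ 0 → V 0 j = 0 ∧ V j 0 = 0) ∧
       (∀ i j, star (V.submatrix Fin.succ Fin.succ i j) = V.submatrix Fin.succ Fin.succ i j) ∧
       V.submatrix Fin.succ Fin.succ * (V.submatrix Fin.succ Fin.succ).conjTranspose = 1 ∧
       (V.submatrix Fin.succ Fin.succ).conjTranspose * V.submatrix Fin.succ Fin.succ = 1) := by
  obtain ⟨hT1, hT2⟩ := hTorth
  obtain ⟨hU1, hU2⟩ := hunitary
  set c : ℂ := ((1 / Real.sqrt (n + 1) : ℝ) : ℂ) with hcdef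
  have hc : c ≠ 0 := by
    have : Real.sqrt (n + 1) ≠ 0 := by positivity
    simp [hcdef, this]
  set f : ℂ →+* A := (algebraMap ℂ A : ℂ →+* A) with hf
  set S : Matrix (Fin (n + 1)) (Fin (n + 1)) A := T.map (algebraMap ℂ A) with hSdef
  set V : Matrix (Fin (n + 1)) (Fin (n + 1)) A := S.transpose * U * S with hVdef
  have hTconj : ∀ i j, (starRingEnd ℂ) (T i j) = T i j := fun i j =>
    Complex.conj_eq_iff_im.mpr (hTreal i j)
  -- column sums of T
  have hcolsum : ∀ a, (∑ i, T i a) = if a = 0 then c⁻¹ else 0 := by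
    intro a
    have h : (T.transpose * T) 0 a = (1 : Matrix (Fin (n + 1)) (Fin (n + 1)) ℂ) 0 a := by
      rw [hT2]
    rw [Matrix.mul_apply] at h
    simp only [Matrix.transpose_apply, hTcol, Matrix.one_apply, ← Finset.mul_sum] at h
    by_cases ha : a = 0
    · subst ha
      simp only [if_pos rfl] at h ⊢
      exact eq_inv_of_mul_eq_one_right (by simpa using h)
    · simp only [if_neg ha, if_neg (Ne.symm ha)] at h ⊢
      exact (mul_eq_zero.mp h).resolve_left hc
  -- entries of V
  have hV : ∀ a b, V a b = ∑ i, ∑ j, algebraMap ℂ A (T i a * T j b) * U i j := by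
    intro a b
    rw [hVdef]
    simp only [Matrix.mul_apply, Matrix.transpose_apply, hSdef, Matrix.map_apply,
      Finset.sum_mul]
    rw [Finset.sum_comm]
    exact Finset.sum_congr rfl fun i _ => Finset.sum_congr rfl fun j _ => aux_comm _ _ _
  -- orthogonality facts over A
  have hSS : S * S.transpose = 1 := by
    rw [hSdef, ← Matrix.transpose_map, ← Matrix.map_mul (f := f), hT1]
    exact Matrix.map_one _ (map_zero f) (map_one f)
  have hSTS : S.transpose * S = 1 := by
    rw [hSdef, ← Matrix.transpose_map, ← Matrix.map_mul (f := f), hT2]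
    exact Matrix.map_one _ (map_zero f) (map_one f)
  have hstarS : ∀ i j, star (S i j) = S i j := by
    intro i j
    rw [hSdef]
    simp only [Matrix.map_apply]
    rw [← algebraMap_star_comm]
    exact congrArg _ (hTconj i j)
  have hSconj : S.conjTranspose = S.transpose := by
    ext i j
    rw [Matrix.conjTranspose_apply, Matrix.transpose_apply, hstarS]
  have hSTconj : S.transpose.conjTranspose = S := by
    ext i j
    rw [Matrix.conjTranspose_apply, Matrix.transpose_apply, hstarS]
  have hVH : V.conjTranspose = S.transpose * U.conjTranspose * S := by
    rw [hVdef, Matrix.conjTranspose_mul, Matrix.conjTranspose_mul, hSconj, hSTconj]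
    simp only [mul_assoc]
  have hVunit1 : V * V.conjTranspose = 1 := by
    rw [hVH, hVdef]
    calc S.transpose * U * S * (S.transpose * U.conjTranspose * S)
        = S.transpose * (U * (S * S.transpose) * (U.conjTranspose * S)) := by
          simp only [mul_assoc]
      _ = S.transpose * (U * U.conjTranspose) * S := by rw [hSS, mul_one]; simp only [mul_assoc]
      _ = 1 := by rw [hU1, mul_one, hSTS]
  have hVunit2 : V.conjTranspose * V = 1 := by
    rw [hVH, hVdef]
    calc S.transpose * U.conjTranspose * S * (S.transpose * U * S)
        = S.transpose * (U.conjTranspose * (S * S.transpose) * (U * S)) := by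
          simp only [mul_assoc]
      _ = S.transpose * (U.conjTranspose * U) * S := by rw [hSS, mul_one]; simp only [mul_assoc]
      _ = 1 := by rw [hU2, mul_one, hSTS]
  -- star-selfness of entries of V
  have hVstar : ∀ a b, star (V a b) = V a b := by
    intro a b
    rw [hV a b, star_sum]
    refine Finset.sum_congr rfl fun i _ => ?_
    rw [star_sum]
    refine Finset.sum_congr rfl fun j _ => ?_
    rw [star_mul, hsa, ← algebraMap_star_comm]
    have hre : (starRingEnd ℂ) (T i a * T j b) = T i a * T j b := by
      rw [map_mul, hTconj, hTconj]
    rw [show (star (T i a * T j b) : ℂ) = T i a * T j b from hre]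
    exact (Algebra.commutes _ _).symm
  constructor
  · rintro ⟨hrow, hcol⟩
    have hVcol : ∀ a, V a 0 = if a = 0 then 1 else 0 := by
      intro a
      rw [hV a 0]
      have hinner : ∀ i, (∑ j, algebraMap ℂ A (T i a * T j 0) * U i j)
          = algebraMap ℂ A (T i a * c) := by
        intro i
        calc (∑ j, algebraMap ℂ A (T i a * T j 0) * U i j)
            = ∑ j, algebraMap ℂ A (T i a * c) * U i j :=
              Finset.sum_congr rfl fun j _ => by rw [hTcol]
          _ = algebraMap ℂ A (T i a * c) * ∑ j, U i j := by rw [Finset.mul_sum]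
          _ = _ := by rw [hrow i, mul_one]
      simp only [hinner]
      rw [← map_sum, ← Finset.sum_mul, hcolsum a]
      by_cases ha : a = 0
      · simp [ha, inv_mul_cancel₀ hc]
      · simp [ha]
    have hVrow : ∀ b, V 0 b = if b = 0 then 1 else 0 := by
      intro b
      rw [hV 0 b, Finset.sum_comm]
      have hinner : ∀ j, (∑ i, algebraMap ℂ A (T i 0 * T j b) * U i j)
          = algebraMap ℂ A (c * T j b) := by
        intro j
        calc (∑ i, algebraMap ℂ A (T i 0 * T j b) * U i j)
            = ∑ i, algebraMap ℂ A (c * T j b) * U i j :=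
              Finset.sum_congr rfl fun i _ => by rw [hTcol]
          _ = algebraMap ℂ A (c * T j b) * ∑ i, U i j := by rw [Finset.mul_sum]
          _ = _ := by rw [hcol j, mul_one]
      simp only [hinner]
      rw [← map_sum, ← Finset.mul_sum, hcolsum b]
      by_cases hb : b = 0
      · simp [hb, mul_inv_cancel₀ hc]
      · simp [hb]
    refine ⟨by simpa using hVcol 0, fun j hj => ⟨by simp [hVrow j, hj], by simp [hVcol j, hj]⟩,
      fun i j => by simp only [Matrix.submatrix_apply]; exact hVstar _ _, ?_, ?_⟩
    · ext i j
      have h := congr_fun (congr_fun hVunit1 i.succ) j.succ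
      rw [Matrix.mul_apply, Fin.sum_univ_succ] at h
      rw [Matrix.conjTranspose_apply, hVcol j.succ, if_neg (Fin.succ_ne_zero j)] at h
      simp only [star_zero, mul_zero, zero_add, Matrix.one_apply, Fin.succ_inj] at h
      simpa [Matrix.mul_apply, Matrix.conjTranspose_apply, Matrix.submatrix_apply,
        Matrix.one_apply] using h
    · ext i j
      have h := congr_fun (congr_fun hVunit2 i.succ) j.succ
      rw [Matrix.mul_apply, Fin.sum_univ_succ] at h
      rw [Matrix.conjTranspose_apply, hVrow i.succ, if_neg (Fin.succ_ne_zero i)] at h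
      simp only [star_zero, zero_mul, zero_add, Matrix.one_apply, Fin.succ_inj] at h
      simpa [Matrix.mul_apply, Matrix.conjTranspose_apply, Matrix.submatrix_apply,
        Matrix.one_apply] using h
  · rintro ⟨hV00, hz, -, -, -⟩
    have hVcol : ∀ a, V a 0 = if a = 0 then 1 else 0 := by
      intro a
      by_cases ha : a = 0
      · simp [ha, hV00]
      · simp [ha, (hz a ha).2]
    have hVrow : ∀ b, V 0 b = if b = 0 then 1 else 0 := by
      intro b
      by_cases hb : b = 0
      · simp [hb, hV00]
      · simp [hb, (hz b hb).1]
    have hUeq : U = S * V * S.transpose := by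
      rw [hVdef]
      calc U = (S * S.transpose) * U * (S * S.transpose) := by rw [hSS, one_mul, mul_one]
        _ = S * (S.transpose * U * S) * S.transpose := by simp only [mul_assoc]
    have hSsum : ∀ b, (∑ j, S j b) = algebraMap ℂ A (if b = 0 then c⁻¹ else 0) := by
      intro b
      rw [hSdef]
      simp only [Matrix.map_apply]
      rw [← map_sum, hcolsum b]
    constructor
    · intro i
      have hU' : ∀ j, U i j = ∑ b, (S * V) i b * S j b := by
        intro j
        conv_lhs => rw [hUeq]
        rw [Matrix.mul_apply]
        exact Finset.sum_congr rfl fun b _ => by rw [Matrix.transpose_apply]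
      calc (∑ j, U i j) = ∑ j, ∑ b, (S * V) i b * S j b :=
            Finset.sum_congr rfl fun j _ => hU' j
        _ = ∑ b, (S * V) i b * ∑ j, S j b := by
            rw [Finset.sum_comm]
            exact Finset.sum_congr rfl fun b _ => (Finset.mul_sum _ _ _).symm
        _ = ∑ b, (S * V) i b * algebraMap ℂ A (if b = 0 then c⁻¹ else 0) := by
            simp only [hSsum]
        _ = (S * V) i 0 * algebraMap ℂ A c⁻¹ := by
            rw [Finset.sum_eq_single 0]
            · simp
            · intro b _ hb; simp [hb]
            · simp
        _ = 1 := by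
            have : (S * V) i 0 = algebraMap ℂ A c := by
              rw [Matrix.mul_apply]
              rw [Finset.sum_eq_single 0]
              · rw [hVcol 0, if_pos rfl, mul_one, hSdef]
                simp [Matrix.map_apply, hTcol i]
              · intro b _ hb; rw [hVcol b, if_neg hb, mul_zero]
              · simp
            rw [this, ← map_mul, mul_inv_cancel₀ hc, map_one]
    · intro j
      have hU' : ∀ i, U i j = ∑ a, S i a * (V * S.transpose) a j := by
        intro i
        conv_lhs => rw [hUeq, mul_assoc]
        rw [Matrix.mul_apply]
      calc (∑ i, U i j) = ∑ i, ∑ a, S i a * (V * S.transpose) a j :=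
            Finset.sum_congr rfl fun i _ => hU' i
        _ = ∑ a, (∑ i, S i a) * (V * S.transpose) a j := by
            rw [Finset.sum_comm]
            exact Finset.sum_congr rfl fun a _ => (Finset.sum_mul _ _ _).symm
        _ = ∑ a, algebraMap ℂ A (if a = 0 then c⁻¹ else 0) * (V * S.transpose) a j := by
            simp only [hSsum]
        _ = algebraMap ℂ A c⁻¹ * (V * S.transpose) 0 j := by
            rw [Finset.sum_eq_single 0]
            · simp
            · intro a _ ha; simp [ha]
            · simp
        _ = 1 := by
            have : (V * S.transpose) 0 j = algebraMap ℂ A c := by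
              rw [Matrix.mul_apply]
              rw [Finset.sum_eq_single 0]
              · rw [hVrow 0, if_pos rfl, one_mul, Matrix.transpose_apply, hSdef]
                simp [Matrix.map_apply, hTcol j]
              · intro b _ hb; rw [hVrow b, if_neg hb, zero_mul]
              · simp
            rw [this, ← map_mul, inv_mul_cancel₀ hc, map_one]
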